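/- Suppose M : ℕ → (0,∞) satisfies lim_{N→∞} N(ln ln N)²/(M(N)·ln N) = 0. Then there exist constants C9, C10 in (0,∞) such that for all sufficiently large N and all β > 0: ∑_{n=1}^{N} e^{−4M(N)·γ_{θ_n}(β)}·θ_n^{−1} ≤ C9·N·ln ln N, and ∑_{n=1}^{N} e^{−4M(N)·γ_{θ_n}(β)}·csch(γ_{θ_n}(β)) ≤ C10·N·ln ln N, where θ_n = π(2n−1)/(2N). -/

import Mathlib

open Filter Finset

/-- The hyperbolic cotangent. -/
noncomputable def coth (x : ℝ) : ℝ := Real.cosh x / Real.sinh x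

/-- The hyperbolic cosecant. -/
noncomputable def csch (x : ℝ) : ℝ := 1 / Real.sinh x

lemma aux_sinh_le (t : ℝ) : Real.sinh t ≤ t * Real.exp t := by
  rw [Real.sinh_eq]
  have h1 : 1 - 2*t + 1 ≤ Real.exp (-(2*t)) + 1 := by
    have := Real.add_one_le_exp (-(2*t)); linarith
  have hFF : Real.exp (-t) * Real.exp (-t) = Real.exp (-(2*t)) := by
    rw [← Real.exp_add]; ring_nf
  have hEF : Real.exp t * Real.exp (-t) = 1 := by
    rw [← Real.exp_add]; simp
  nlinarith [Real.exp_pos t, Real.exp_pos (-t)]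

lemma aux_harmonic : ∀ K : ℕ, ∑ n ∈ Finset.Icc 1 K, ((n:ℝ))⁻¹ ≤ 1 + Real.log K := by
  intro K
  induction K with
  | zero => simp
  | succ K ih =>
    rcases Nat.eq_zero_or_pos K with rfl | hK
    · norm_num
    rw [Finset.sum_Icc_succ_top (by omega)]
    have hKpos : (0:ℝ) < K := by exact_mod_cast hK
    have hlog : Real.log K + ((K:ℝ)+1)⁻¹ ≤ Real.log (K+1) := by
      have h := Real.log_le_sub_one_of_pos (x := (K:ℝ)/((K:ℝ)+1)) (by positivity)
      rw [Real.log_div (by positivity) (by positivity)] at h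
      have : (K:ℝ)/((K:ℝ)+1) - 1 = -(((K:ℝ)+1)⁻¹) := by field_simp; ring
      rw [this] at h; linarith
    push_cast
    push_cast at ih
    linarith

lemma aux_invsq (K : ℕ) (hK : 1 ≤ K) : ∀ N : ℕ, K ≤ N →
    ∑ n ∈ Finset.Icc (K+1) N, ((n:ℝ))⁻¹ * ((n:ℝ))⁻¹ ≤ (K:ℝ)⁻¹ := by
  have key : ∀ N : ℕ, K ≤ N →
      ∑ n ∈ Finset.Icc (K+1) N, ((n:ℝ))⁻¹ * ((n:ℝ))⁻¹ ≤ (K:ℝ)⁻¹ - (N:ℝ)⁻¹ := by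
    intro N
    induction N with
    | zero => intro h; omega
    | succ N ih =>
      intro h
      rcases Nat.lt_or_ge N K with hNK | hNK
      · have : K = N + 1 := by omega
        subst this
        simp
      · have hNpos : (0:ℝ) < N := by
          have : 1 ≤ N := le_trans hK hNK
          exact_mod_cast this
        rw [Finset.sum_Icc_succ_top (by omega)]
        have h2 : ((N:ℝ)+1)⁻¹ * ((N:ℝ)+1)⁻¹ ≤ (N:ℝ)⁻¹ - ((N:ℝ)+1)⁻¹ := by
          rw [inv_mul_eq_div, div_le_iff₀ (by positivity)]
          field_simp
          nlinarith
        push_cast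
        have := ih hNK
        linarith
  intro N hN
  have hNpos : (0:ℝ) ≤ (N:ℝ)⁻¹ := by positivity
  have := key N hN
  linarith

lemma aux_gamma (β θ g : ℝ) (hβ : 0 < β) (hθ : θ ∈ Set.Ioc 0 Real.pi)
    (hg0 : 0 ≤ g) (hgc : Real.cosh g = coth (2*β) * Real.cosh (2*β) - Real.cos θ) :
    θ/5 ≤ g ∧ 2*θ/Real.pi ≤ Real.sinh g := by
  obtain ⟨hθ0, hθπ⟩ := hθ
  have hπ := Real.pi_pos
  have hs : 0 < Real.sinh (2*β) := Real.sinh_pos_iff.2 (by linarith)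
  have hA : 2 ≤ coth (2*β) * Real.cosh (2*β) := by
    have hc : coth (2*β) * Real.cosh (2*β) = Real.cosh (2*β)^2 / Real.sinh (2*β) := by
      unfold coth; ring
    rw [hc, le_div_iff₀ hs]
    nlinarith [Real.cosh_sq (2*β), sq_nonneg (Real.sinh (2*β) - 1)]
  have hcos : Real.cos θ ≤ 1 - 2/Real.pi^2 * θ^2 :=
    Real.cos_le_one_sub_mul_cos_sq (by rw [abs_of_pos hθ0]; exact hθπ)
  have hcoshg : 1 + 2/Real.pi^2 * θ^2 ≤ Real.cosh g := by rw [hgc]; linarith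
  have hid : Real.cosh g = 1 + 2 * Real.sinh (g/2)^2 := by
    have h1 := Real.cosh_two_mul (g/2)
    have h2 : Real.cosh (g/2)^2 = Real.sinh (g/2)^2 + 1 := Real.cosh_sq _
    have h3 : (2:ℝ)*(g/2) = g := by ring
    rw [h3] at h1
    rw [h1, h2]; ring
  have hsh0 : 0 ≤ Real.sinh (g/2) := Real.sinh_nonneg_iff.2 (by linarith)
  have hsh : θ/Real.pi ≤ Real.sinh (g/2) := by
    have he : 2/Real.pi^2 * θ^2 = 2*(θ/Real.pi)^2 := by
      field_simp
    rw [he] at hcoshg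
    have hsq : (θ/Real.pi)^2 ≤ Real.sinh (g/2)^2 := by linarith
    have hpos : 0 < θ/Real.pi := by positivity
    nlinarith [hsq, hsh0, hpos]
  constructor
  · rcases le_or_gt g 2 with hg2 | hg2
    · have h1 : Real.sinh (g/2) ≤ (g/2) * Real.exp (g/2) := aux_sinh_le (g/2)
      have h2 : Real.exp (g/2) ≤ Real.exp 1 := Real.exp_le_exp.2 (by linarith)
      have h3 : Real.exp 1 < 3 := by
        have := Real.exp_one_lt_d9; linarith
      have hπ315 := Real.pi_lt_d2
      have : θ/Real.pi ≤ (g/2) * 3 := by nlinarith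
      rw [div_le_iff₀ hπ] at this
      nlinarith
    · have := Real.pi_lt_d2
      linarith
  · have h1 : Real.sinh g = 2 * Real.sinh (g/2) * Real.cosh (g/2) := by
      have := Real.sinh_two_mul (g/2)
      have h2 : (2:ℝ)*(g/2) = g := by ring
      rwa [h2] at this
    have h2 : 1 ≤ Real.cosh (g/2) := Real.one_le_cosh _
    rw [h1, div_le_iff₀ hπ] at *
    have hsh' : θ ≤ Real.sinh (g/2) * Real.pi := by
      rw [← div_le_iff₀ hπ] at hsh ⊢
      exact hsh
    nlinarith

lemma aux_master (N K : ℕ) (a : ℝ) (ha : 0 < a) (hK1 : 1 ≤ K) (hKN : K ≤ N) :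
    ∑ n ∈ Finset.Icc 1 N, Real.exp (-(a * (Real.pi * (2*(n:ℝ)-1)/(2*(N:ℝ))))) *
      (Real.pi * (2*(n:ℝ)-1)/(2*(N:ℝ)))⁻¹
    ≤ 2*(N:ℝ)/Real.pi * (1 + Real.log K) + 4*(N:ℝ)^2/(a*Real.pi^2) * (K:ℝ)⁻¹ := by
  have hπ := Real.pi_pos
  have hN1 : 1 ≤ N := le_trans hK1 hKN
  have hN0 : (0:ℝ) < N := by exact_mod_cast hN1
  have hθpos : ∀ n : ℕ, 1 ≤ n → (0:ℝ) < Real.pi * (2*(n:ℝ)-1)/(2*(N:ℝ)) := by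
    intro n hn
    have : (1:ℝ) ≤ (n:ℝ) := by exact_mod_cast hn
    have : (0:ℝ) < 2*(n:ℝ)-1 := by linarith
    positivity
  have hsplit : Finset.Icc 1 N = Finset.Icc 1 K ∪ Finset.Icc (K+1) N := by
    ext x; simp only [Finset.mem_Icc, Finset.mem_union]; omega
  have hdisj : Disjoint (Finset.Icc 1 K) (Finset.Icc (K+1) N) := by
    simp only [Finset.disjoint_left, Finset.mem_Icc]; omega
  rw [hsplit, Finset.sum_union hdisj]
  have hhead : ∑ n ∈ Finset.Icc 1 K, Real.exp (-(a * (Real.pi * (2*(n:ℝ)-1)/(2*(N:ℝ))))) *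
      (Real.pi * (2*(n:ℝ)-1)/(2*(N:ℝ)))⁻¹ ≤ 2*(N:ℝ)/Real.pi * (1 + Real.log K) := by
    calc ∑ n ∈ Finset.Icc 1 K, Real.exp (-(a * (Real.pi * (2*(n:ℝ)-1)/(2*(N:ℝ))))) *
          (Real.pi * (2*(n:ℝ)-1)/(2*(N:ℝ)))⁻¹
        ≤ ∑ n ∈ Finset.Icc 1 K, 2*(N:ℝ)/Real.pi * ((n:ℝ))⁻¹ := by
          apply Finset.sum_le_sum
          intro n hn
          rw [Finset.mem_Icc] at hn
          have hn1 : (1:ℝ) ≤ (n:ℝ) := by exact_mod_cast hn.1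
          have hθ := hθpos n hn.1
          have hexp : Real.exp (-(a * (Real.pi * (2*(n:ℝ)-1)/(2*(N:ℝ))))) ≤ 1 := by
            rw [Real.exp_le_one_iff]
            nlinarith
          have hinv : (Real.pi * (2*(n:ℝ)-1)/(2*(N:ℝ)))⁻¹ ≤ 2*(N:ℝ)/Real.pi * ((n:ℝ))⁻¹ := by
            rw [inv_eq_one_div, div_le_iff₀ hθ]
            have h1 : 2*(N:ℝ)/Real.pi * ((n:ℝ))⁻¹ * (Real.pi * (2*(n:ℝ)-1)/(2*(N:ℝ)))
                = (2*(n:ℝ)-1) * ((n:ℝ))⁻¹ := by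
              field_simp
            rw [h1]
            have : (1:ℝ) ≤ (2*(n:ℝ)-1) * ((n:ℝ))⁻¹ := by
              rw [le_mul_inv_iff₀ (by linarith)]
              linarith
            linarith
          have h0 : (0:ℝ) ≤ (Real.pi * (2*(n:ℝ)-1)/(2*(N:ℝ)))⁻¹ := by positivity
          calc Real.exp (-(a * (Real.pi * (2*(n:ℝ)-1)/(2*(N:ℝ))))) *
                (Real.pi * (2*(n:ℝ)-1)/(2*(N:ℝ)))⁻¹
              ≤ 1 * (Real.pi * (2*(n:ℝ)-1)/(2*(N:ℝ)))⁻¹ := by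
                apply mul_le_mul_of_nonneg_right hexp h0
            _ = (Real.pi * (2*(n:ℝ)-1)/(2*(N:ℝ)))⁻¹ := one_mul _
            _ ≤ 2*(N:ℝ)/Real.pi * ((n:ℝ))⁻¹ := hinv
      _ = 2*(N:ℝ)/Real.pi * ∑ n ∈ Finset.Icc 1 K, ((n:ℝ))⁻¹ := by
          rw [Finset.mul_sum]
      _ ≤ 2*(N:ℝ)/Real.pi * (1 + Real.log K) := by
          apply mul_le_mul_of_nonneg_left (aux_harmonic K) (by positivity)
  have htail : ∑ n ∈ Finset.Icc (K+1) N, Real.exp (-(a * (Real.pi * (2*(n:ℝ)-1)/(2*(N:ℝ))))) *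
      (Real.pi * (2*(n:ℝ)-1)/(2*(N:ℝ)))⁻¹ ≤ 4*(N:ℝ)^2/(a*Real.pi^2) * (K:ℝ)⁻¹ := by
    calc ∑ n ∈ Finset.Icc (K+1) N, Real.exp (-(a * (Real.pi * (2*(n:ℝ)-1)/(2*(N:ℝ))))) *
          (Real.pi * (2*(n:ℝ)-1)/(2*(N:ℝ)))⁻¹
        ≤ ∑ n ∈ Finset.Icc (K+1) N, 4*(N:ℝ)^2/(a*Real.pi^2) * (((n:ℝ))⁻¹ * ((n:ℝ))⁻¹) := by
          apply Finset.sum_le_sum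
          intro n hn
          rw [Finset.mem_Icc] at hn
          have hn1 : 1 ≤ n := by omega
          have hnr : (1:ℝ) ≤ (n:ℝ) := by exact_mod_cast hn1
          have hθ := hθpos n hn1
          set θ : ℝ := Real.pi * (2*(n:ℝ)-1)/(2*(N:ℝ)) with hθdef
          have hexp : Real.exp (-(a * θ)) ≤ (a*θ)⁻¹ := by
            rw [Real.exp_neg]
            apply inv_anti₀ (by positivity)
            nlinarith [Real.add_one_le_exp (a*θ)]
          have hθn : Real.pi * (n:ℝ) / (2*(N:ℝ)) ≤ θ := by
            rw [hθdef]
            apply div_le_div_of_nonneg_right ?_ (by positivity)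
            nlinarith
          have hθlow : (0:ℝ) < Real.pi * (n:ℝ) / (2*(N:ℝ)) := by positivity
          calc Real.exp (-(a * θ)) * θ⁻¹ ≤ (a*θ)⁻¹ * θ⁻¹ := by
                apply mul_le_mul_of_nonneg_right hexp (by positivity)
            _ = (1/a) * (θ⁻¹ * θ⁻¹) := by
                field_simp
            _ ≤ (1/a) * ((Real.pi * (n:ℝ) / (2*(N:ℝ)))⁻¹ * (Real.pi * (n:ℝ) / (2*(N:ℝ)))⁻¹) := by
                apply mul_le_mul_of_nonneg_left ?_ (by positivity)
                have h1 : θ⁻¹ ≤ (Real.pi * (n:ℝ) / (2*(N:ℝ)))⁻¹ :=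
                  inv_anti₀ hθlow hθn
                have h2 : (0:ℝ) ≤ θ⁻¹ := by positivity
                have h3 : (0:ℝ) ≤ (Real.pi * (n:ℝ) / (2*(N:ℝ)))⁻¹ := by positivity
                exact mul_le_mul h1 h1 h2 h3
            _ = 4*(N:ℝ)^2/(a*Real.pi^2) * (((n:ℝ))⁻¹ * ((n:ℝ))⁻¹) := by
                field_simp; ring
      _ = 4*(N:ℝ)^2/(a*Real.pi^2) * ∑ n ∈ Finset.Icc (K+1) N, (((n:ℝ))⁻¹ * ((n:ℝ))⁻¹) := by
          rw [Finset.mul_sum]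
      _ ≤ 4*(N:ℝ)^2/(a*Real.pi^2) * (K:ℝ)⁻¹ := by
          apply mul_le_mul_of_nonneg_left (aux_invsq K hK1 N hKN) (by positivity)
  linarith

set_option maxHeartbeats 2000000 in
theorem stmt8 (M : ℕ → ℝ) (hMpos : ∀ N, 0 < M N)
    (hM : Tendsto (fun N : ℕ =>
        (N : ℝ) * (Real.log (Real.log N)) ^ 2 / (M N * Real.log N)) atTop (nhds 0))
    (γ : ℝ → ℝ → ℝ)
    (hγ : ∀ β > (0 : ℝ), ∀ θ ∈ Set.Ioc 0 Real.pi,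
      0 ≤ γ β θ ∧ Real.cosh (γ β θ) = coth (2 * β) * Real.cosh (2 * β) - Real.cos θ) :
    ∃ C9 C10 : ℝ, 0 < C9 ∧ 0 < C10 ∧ ∀ᶠ N : ℕ in atTop, ∀ β > (0 : ℝ),
      (∑ n ∈ Finset.Icc 1 N,
          Real.exp (-(4 * M N) * γ β (Real.pi * (2 * (n : ℝ) - 1) / (2 * N))) *
            (Real.pi * (2 * (n : ℝ) - 1) / (2 * N))⁻¹)
        ≤ C9 * N * Real.log (Real.log N) ∧
      (∑ n ∈ Finset.Icc 1 N,
          Real.exp (-(4 * M N) * γ β (Real.pi * (2 * (n : ℝ) - 1) / (2 * N))) *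
            csch (γ β (Real.pi * (2 * (n : ℝ) - 1) / (2 * N))))
        ≤ C10 * N * Real.log (Real.log N) := by
  refine ⟨3, 5, by norm_num, by norm_num, ?_⟩
  have hev1 : ∀ᶠ N : ℕ in atTop,
      (N:ℝ) * (Real.log (Real.log N))^2 / (M N * Real.log N) < 1 :=
    hM.eventually_lt_const one_pos
  filter_upwards [hev1, eventually_ge_atTop 55] with N hεN hN55
  intro β hβ
  have hπ := Real.pi_pos
  have hMN := hMpos N
  have hN0 : (0:ℝ) < N := by
    have : (55:ℝ) ≤ (N:ℝ) := by exact_mod_cast hN55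
    linarith
  have hexp4 : Real.exp 4 < 55 := by
    have h := Real.exp_one_lt_d9
    have h2 : Real.exp (4:ℝ) = Real.exp 1 ^ 4 := by
      rw [← Real.exp_nat_mul]; norm_num
    have h4 : Real.exp 1 ^ 4 < 2.7182818286 ^ 4 :=
      pow_lt_pow_left₀ h (Real.exp_pos 1).le (by norm_num)
    have h5 : (2.7182818286:ℝ)^4 < 55 := by norm_num
    rw [h2]
    linarith
  have hlogN : (4:ℝ) ≤ Real.log N := by
    rw [Real.le_log_iff_exp_le hN0]
    have : (55:ℝ) ≤ (N:ℝ) := by exact_mod_cast hN55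
    linarith
  set L := Real.log (Real.log N) with hLdef
  have hL1 : 1 ≤ L := by
    rw [hLdef, Real.le_log_iff_exp_le (by linarith)]
    have := Real.exp_one_lt_d9; linarith
  have hMlog : (N:ℝ) * L^2 < M N * Real.log N := by
    rw [div_lt_one (by positivity)] at hεN
    exact hεN
  set K := ⌈Real.log N⌉₊ with hKdef
  have hK1 : 1 ≤ K := Nat.ceil_pos.2 (by linarith)
  have hKN : K ≤ N := by
    apply Nat.ceil_le.2
    have := Real.log_le_sub_one_of_pos hN0
    linarith
  have hKge : Real.log N ≤ (K:ℝ) := Nat.le_ceil _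
  have hKle : (K:ℝ) ≤ Real.log N + 1 := (Nat.ceil_lt_add_one (by linarith)).le
  have hKpos : (0:ℝ) < K := by exact_mod_cast hK1
  have hlogK : Real.log K ≤ 2 * L := by
    have h1 : Real.log (K:ℝ) ≤ Real.log ((Real.log N)^2) := by
      apply Real.log_le_log hKpos
      nlinarith
    rw [Real.log_pow] at h1
    push_cast at h1
    rw [hLdef]
    linarith
  set a := 4 * M N / 5 with hadef
  have ha : 0 < a := by rw [hadef]; positivity
  have hmaster := aux_master N K a ha hK1 hKN
  have hRHS : 2*(N:ℝ)/Real.pi * (1 + Real.log K) + 4*(N:ℝ)^2/(a*Real.pi^2) * (K:ℝ)⁻¹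
      ≤ 3 * (N:ℝ) * L := by
    have hπ3 : (3:ℝ) < Real.pi := Real.pi_gt_three
    have h1 : 2*(N:ℝ)/Real.pi * (1 + Real.log K) ≤ 2 * (N:ℝ) * L := by
      have hc : 1 + Real.log K ≤ 3 * L := by linarith
      calc 2*(N:ℝ)/Real.pi * (1 + Real.log K) ≤ 2*(N:ℝ)/Real.pi * (3*L) := by
            apply mul_le_mul_of_nonneg_left hc (by positivity)
        _ ≤ 2 * (N:ℝ) * L := by
            rw [div_mul_eq_mul_div, div_le_iff₀ hπ]
            nlinarith [mul_pos hN0 (lt_of_lt_of_le one_pos hL1), hπ3]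
    have h2 : 4*(N:ℝ)^2/(a*Real.pi^2) * (K:ℝ)⁻¹ ≤ (N:ℝ) * L := by
      have e1 : 4*(N:ℝ)^2/(a*Real.pi^2) * (K:ℝ)⁻¹ = 5*(N:ℝ)^2/(M N * Real.pi^2 * (K:ℝ)) := by
        rw [hadef]; field_simp
      rw [e1, div_le_iff₀ (by positivity)]
      have s1 : (N:ℝ)*L^2 < M N * (K:ℝ) := by
        calc (N:ℝ)*L^2 < M N * Real.log N := hMlog
          _ ≤ M N * (K:ℝ) := by
              apply mul_le_mul_of_nonneg_left hKge (le_of_lt hMN)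
      have s2 : (9:ℝ) ≤ Real.pi^2 := by nlinarith
      have s3 : 9*((N:ℝ)*L^2) ≤ Real.pi^2*(M N*(K:ℝ)) := by nlinarith [mul_pos hMN hKpos]
      have hNL : (0:ℝ) < (N:ℝ)*L := mul_pos hN0 (lt_of_lt_of_le one_pos hL1)
      have t1 : 9*((N:ℝ)*L^2) * ((N:ℝ)*L) ≤ Real.pi^2*(M N*(K:ℝ)) * ((N:ℝ)*L) :=
        mul_le_mul_of_nonneg_right s3 hNL.le
      have hL3 : (1:ℝ) ≤ L^3 := by nlinarith [hL1]
      have u1 : 5*(N:ℝ)^2 ≤ 9*(N:ℝ)^2*L^3 := by nlinarith [hL3, sq_nonneg (N:ℝ)]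
      nlinarith [t1, u1]
    linarith
  have hS : ∑ n ∈ Finset.Icc 1 N, Real.exp (-(a * (Real.pi * (2*(n:ℝ)-1)/(2*(N:ℝ))))) *
      (Real.pi * (2*(n:ℝ)-1)/(2*(N:ℝ)))⁻¹ ≤ 3 * (N:ℝ) * L := le_trans hmaster hRHS
  -- per-term facts
  have hterm : ∀ n ∈ Finset.Icc 1 N,
      (Real.pi * (2*(n:ℝ)-1)/(2*(N:ℝ))) ∈ Set.Ioc 0 Real.pi ∧
      Real.exp (-(4 * M N) * γ β (Real.pi * (2*(n:ℝ)-1)/(2*(N:ℝ))))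
        ≤ Real.exp (-(a * (Real.pi * (2*(n:ℝ)-1)/(2*(N:ℝ))))) ∧
      csch (γ β (Real.pi * (2*(n:ℝ)-1)/(2*(N:ℝ))))
        ≤ Real.pi/2 * (Real.pi * (2*(n:ℝ)-1)/(2*(N:ℝ)))⁻¹ := by
    intro n hn
    rw [Finset.mem_Icc] at hn
    have hn1 : (1:ℝ) ≤ (n:ℝ) := by exact_mod_cast hn.1
    have hnN : (n:ℝ) ≤ (N:ℝ) := by exact_mod_cast hn.2
    set θ : ℝ := Real.pi * (2*(n:ℝ)-1)/(2*(N:ℝ)) with hθdef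
    have hθ0 : 0 < θ := by
      rw [hθdef]
      have : (0:ℝ) < 2*(n:ℝ)-1 := by linarith
      positivity
    have hθπ : θ ≤ Real.pi := by
      rw [hθdef, div_le_iff₀ (by positivity)]
      nlinarith
    have hθmem : θ ∈ Set.Ioc 0 Real.pi := ⟨hθ0, hθπ⟩
    obtain ⟨hg0, hgc⟩ := hγ β hβ θ hθmem
    obtain ⟨hg5, hgsinh⟩ := aux_gamma β θ (γ β θ) hβ hθmem hg0 hgc
    refine ⟨hθmem, ?_, ?_⟩
    · apply Real.exp_le_exp.2
      rw [hadef]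
      nlinarith
    · have hsp : 0 < Real.sinh (γ β θ) := by
        have : (0:ℝ) < 2*θ/Real.pi := by positivity
        linarith
      unfold csch
      calc 1 / Real.sinh (γ β θ) ≤ 1 / (2*θ/Real.pi) := by
            apply one_div_le_one_div_of_le (by positivity) hgsinh
        _ = Real.pi/2 * θ⁻¹ := by field_simp
  constructor
  · calc ∑ n ∈ Finset.Icc 1 N,
        Real.exp (-(4 * M N) * γ β (Real.pi * (2 * (n : ℝ) - 1) / (2 * N))) *
          (Real.pi * (2 * (n : ℝ) - 1) / (2 * N))⁻¹
        ≤ ∑ n ∈ Finset.Icc 1 N, Real.exp (-(a * (Real.pi * (2*(n:ℝ)-1)/(2*(N:ℝ))))) *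
            (Real.pi * (2*(n:ℝ)-1)/(2*(N:ℝ)))⁻¹ := by
          apply Finset.sum_le_sum
          intro n hn
          obtain ⟨hθmem, hexp, _⟩ := hterm n hn
          apply mul_le_mul_of_nonneg_right hexp
          exact inv_nonneg.2 hθmem.1.le
      _ ≤ 3 * (N:ℝ) * L := hS
  · calc ∑ n ∈ Finset.Icc 1 N,
        Real.exp (-(4 * M N) * γ β (Real.pi * (2 * (n : ℝ) - 1) / (2 * N))) *
          csch (γ β (Real.pi * (2 * (n : ℝ) - 1) / (2 * N)))
        ≤ ∑ n ∈ Finset.Icc 1 N, Real.pi/2 * (Real.exp (-(a * (Real.pi * (2*(n:ℝ)-1)/(2*(N:ℝ))))) *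
            (Real.pi * (2*(n:ℝ)-1)/(2*(N:ℝ)))⁻¹) := by
          apply Finset.sum_le_sum
          intro n hn
          obtain ⟨hθmem, hexp, hcsch⟩ := hterm n hn
          have hcsch0 : 0 ≤ csch (γ β (Real.pi * (2 * (n : ℝ) - 1) / (2 * N))) := by
            obtain ⟨hg0, hgc⟩ := hγ β hβ _ hθmem
            obtain ⟨_, hgsinh⟩ := aux_gamma β _ _ hβ hθmem hg0 hgc
            have hθp : (0:ℝ) < Real.pi * (2 * (n : ℝ) - 1) / (2 * N) := hθmem.1
            have h2θ : (0:ℝ) < 2*(Real.pi * (2 * (n : ℝ) - 1) / (2 * N))/Real.pi :=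
              div_pos (by linarith) hπ
            have hsp : 0 < Real.sinh (γ β (Real.pi * (2 * (n : ℝ) - 1) / (2 * N))) := by
              linarith
            unfold csch
            exact (div_pos one_pos hsp).le
          calc Real.exp (-(4 * M N) * γ β (Real.pi * (2 * (n : ℝ) - 1) / (2 * N))) *
                csch (γ β (Real.pi * (2 * (n : ℝ) - 1) / (2 * N)))
              ≤ Real.exp (-(a * (Real.pi * (2*(n:ℝ)-1)/(2*(N:ℝ))))) *
                (Real.pi/2 * (Real.pi * (2*(n:ℝ)-1)/(2*(N:ℝ)))⁻¹) := by
                apply mul_le_mul hexp hcsch hcsch0 (le_of_lt (Real.exp_pos _))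
            _ = Real.pi/2 * (Real.exp (-(a * (Real.pi * (2*(n:ℝ)-1)/(2*(N:ℝ))))) *
                (Real.pi * (2*(n:ℝ)-1)/(2*(N:ℝ)))⁻¹) := by ring
      _ = Real.pi/2 * ∑ n ∈ Finset.Icc 1 N,
            (Real.exp (-(a * (Real.pi * (2*(n:ℝ)-1)/(2*(N:ℝ))))) *
            (Real.pi * (2*(n:ℝ)-1)/(2*(N:ℝ)))⁻¹) := by
          rw [Finset.mul_sum]
      _ ≤ Real.pi/2 * (3 * (N:ℝ) * L) := by
          apply mul_le_mul_of_nonneg_left hS (by positivity)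
      _ ≤ 5 * (N:ℝ) * L := by
          have hp := Real.pi_lt_d2
          have hNL : (0:ℝ) < (N:ℝ)*L := mul_pos hN0 (lt_of_lt_of_le one_pos hL1)
          nlinarith [hNL, hp]
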